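/- Let a : ℝ → M_n(ℂ) be continuous with a(t) Hermitian positive semidefinite for all t, and let G : ℝ → M_n(ℂ) solve G(0) = Id, G'(t) = -a(t)·G(t). Then for every t ≥ 0, the operator norm ‖G(t)‖ ≤ 1. -/

import Mathlib

open scoped Matrix.Norms.L2Operator ComplexOrder

/-- If `a : ℝ → Mₙ(ℂ)` is continuous with Hermitian positive semidefinite values and
`G` solves `G 0 = 1`, `G' t = -a t * G t`, then `‖G t‖ ≤ 1` (ℓ² operator norm) for `t ≥ 0`. -/
theorem stmt_0 {n : ℕ} (a G : ℝ → Matrix (Fin n) (Fin n) ℂ)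
    (ha_cont : Continuous a) (ha_psd : ∀ t, (a t).PosSemidef)
    (hG0 : G 0 = 1) (hG : ∀ t, HasDerivAt G (-(a t) * G t) t) :
    ∀ t, 0 ≤ t → ‖G t‖ ≤ 1 := by
  intro t ht
  rw [Matrix.cstar_norm_def]
  refine ContinuousLinearMap.opNorm_le_bound _ zero_le_one fun x => ?_
  rw [one_mul]
  set g : ℝ → EuclideanSpace ℂ (Fin n) :=
    fun s => Matrix.toEuclideanCLM (𝕜 := ℂ) (G s) x with hgdef
  -- the map M ↦ toEuclideanCLM M x is a continuous linear map
  let L : Matrix (Fin n) (Fin n) ℂ →ₗ[ℂ] EuclideanSpace ℂ (Fin n) :=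
    { toFun := fun M => Matrix.toEuclideanCLM (𝕜 := ℂ) M x
      map_add' := fun M N => by simp
      map_smul' := fun c M => by simp }
  let Lc := LinearMap.toContinuousLinearMap L
  have hg : ∀ s, HasDerivAt g
      (-(Matrix.toEuclideanCLM (𝕜 := ℂ) (a s) (g s))) s := by
    intro s
    have h := (Lc.restrictScalars ℝ).hasFDerivAt.comp_hasDerivAt s (hG s)
    have h2 : (Lc.restrictScalars ℝ) (-(a s) * G s) = -(Matrix.toEuclideanCLM (𝕜 := ℂ) (a s) (g s)) := by
      simp [Lc, L, hgdef, map_mul]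
    rw [h2] at h
    exact h
  -- real-valued energy function
  set f : ℝ → ℝ := fun s => Complex.reCLM (inner ℂ (g s) (g s) : ℂ) with hfdef
  have hf : ∀ s, HasDerivAt f
      (Complex.reCLM ((inner ℂ (g s) (-(Matrix.toEuclideanCLM (𝕜 := ℂ) (a s) (g s))) : ℂ)
        + (inner ℂ (-(Matrix.toEuclideanCLM (𝕜 := ℂ) (a s) (g s))) (g s) : ℂ))) s := by
    intro s
    exact Complex.reCLM.hasFDerivAt.comp_hasDerivAt s ((hg s).inner ℂ (hg s))
  have key : ∀ s (v : EuclideanSpace ℂ (Fin n)),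
      0 ≤ Complex.re (inner ℂ v (Matrix.toEuclideanCLM (𝕜 := ℂ) (a s) v) : ℂ) := by
    intro s v
    rw [EuclideanSpace.inner_eq_star_dotProduct]
    have := (ha_psd s).re_dotProduct_nonneg (WithLp.equiv 2 _ v)
    simpa [Matrix.ofLp_toEuclideanCLM, Matrix.toLin'_apply, dotProduct_comm ((a s).mulVec _)] using this
  have hderiv_nonpos : ∀ s, deriv f s ≤ 0 := by
    intro s
    rw [(hf s).deriv]
    have h1 := key s (g s)
    have h2 : Complex.re ((inner ℂ (Matrix.toEuclideanCLM (𝕜 := ℂ) (a s) (g s)) (g s)) : ℂ)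
        = Complex.re ((inner ℂ (g s) (Matrix.toEuclideanCLM (𝕜 := ℂ) (a s) (g s))) : ℂ) := by
      rw [← inner_conj_symm (𝕜 := ℂ) (Matrix.toEuclideanCLM (𝕜 := ℂ) (a s) (g s)) (g s)]; exact Complex.conj_re _
    simp only [inner_neg_left, inner_neg_right, Complex.reCLM_apply, map_add, map_neg,
      Complex.add_re, Complex.neg_re, h2]
    linarith
  have hanti : Antitone f :=
    antitone_of_deriv_nonpos (fun s => (hf s).differentiableAt) hderiv_nonpos
  have hle : f t ≤ f 0 := hanti ht
  have hft : ∀ s, f s = ‖g s‖ ^ 2 := fun s => @inner_self_eq_norm_sq ℂ _ _ _ _ (g s)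
  have hf0 : f 0 = ‖x‖ ^ 2 := by
    rw [hft 0]
    simp [hgdef, hG0]
  rw [hft t] at hle
  rw [hf0] at hle
  exact (pow_le_pow_iff_left₀ (norm_nonneg _) (norm_nonneg _) two_ne_zero).mp hle
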